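/- Fix an integer r ≥ 1. Let ξ_1, …, ξ_m be i.i.d. centered real random variables with unit variance and finite moments of all orders, and let g_1, …, g_m be i.i.d. standard Gaussian random variables. Define χ_r(ξ) := m^{−r/2} Σ ξ_{n_1} ξ_{n_2} ⋯ ξ_{n_r}, where the sum runs over all tuples (n_1, …, n_r) ∈ [m]^r with n_i ≠ n_{i+1} for i = 1, …, r−1, and define χ_r(g) analogously. Then there exists a constant C > 0, depending only on r and on the law of ξ_1, such that E[ χ_r(ξ)² ] ≤ E[ χ_r(g)² ] + C/m. -/

import Mathlib

open MeasureTheory ProbabilityTheory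

/-- The set of chains `(n_1, …, n_r) ∈ [m]^r` with `n_i ≠ n_{i+1}`. -/
def chainSet (m r : ℕ) : Finset (Fin r → Fin m) :=
  Finset.univ.filter (fun n => ∀ i j : Fin r, (j : ℕ) = (i : ℕ) + 1 → n i ≠ n j)

/-- The normalised chain-indexed polynomial
`χ_r(ξ) = m^{−r/2} Σ_{n chain} ξ_{n_1} ⋯ ξ_{n_r}`. -/
noncomputable def chaos {Ω : Type*} {m : ℕ} (r : ℕ) (ξ : Fin m → Ω → ℝ) (ω : Ω) : ℝ :=
  (m : ℝ) ^ (-(r : ℝ) / 2) * ∑ n ∈ chainSet m r, ∏ i, ξ (n i) ω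

section Aux

open Real Finset
open scoped ENNReal NNReal

/-! ### Gaussian moment facts -/

noncomputable def gpdf (x : ℝ) : ℝ := gaussianPDFReal 0 1 x

lemma gpdf_eq (x : ℝ) : gpdf x = (Real.sqrt (2 * π))⁻¹ * Real.exp (-(1/2) * x ^ 2) := by
  unfold gpdf gaussianPDFReal
  push_cast
  norm_num
  left
  ring_nf

lemma gpdf_nonneg (x : ℝ) : 0 ≤ gpdf x := gaussianPDFReal_nonneg 0 1 x

lemma gpdf_meas : Measurable gpdf := measurable_gaussianPDFReal 0 1

lemma gauss_eq_withDensity :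
    gaussianReal 0 1 = volume.withDensity (fun x => ENNReal.ofReal (gpdf x)) := by
  rw [gaussianReal_of_var_ne_zero 0 one_ne_zero]
  rfl

lemma ofReal_eq_coe_toNNReal (x : ℝ) : ENNReal.ofReal x = ((x.toNNReal : ℝ≥0) : ℝ≥0∞) := rfl

lemma gauss_integral (f : ℝ → ℝ) :
    ∫ x, f x ∂(gaussianReal 0 1) = ∫ x, gpdf x * f x := by
  rw [gauss_eq_withDensity]
  simp_rw [ofReal_eq_coe_toNNReal]
  rw [integral_withDensity_eq_integral_smul (gpdf_meas.real_toNNReal) f]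
  congr 1
  ext x
  simp [NNReal.smul_def, Real.coe_toNNReal _ (gpdf_nonneg x)]

lemma gauss_integrable_iff (f : ℝ → ℝ) :
    Integrable f (gaussianReal 0 1) ↔ Integrable (fun x => gpdf x * f x) volume := by
  rw [gauss_eq_withDensity]
  simp_rw [ofReal_eq_coe_toNNReal]
  rw [integrable_withDensity_iff_integrable_smul (gpdf_meas.real_toNNReal)]
  constructor <;> intro h <;> refine h.congr (Filter.Eventually.of_forall fun x => ?_) <;>
    simp [NNReal.smul_def, Real.coe_toNNReal _ (gpdf_nonneg x)]

lemma abs_pow_le (x : ℝ) (k : ℕ) : |x| ^ k ≤ 1 + x ^ (2 * k) := by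
  have h2 : x ^ (2 * k) = |x| ^ (2 * k) := ((even_two_mul k).pow_abs x).symm
  rw [h2]
  rcases le_total |x| 1 with h | h
  · have := pow_le_one₀ (abs_nonneg x) h (n := k)
    nlinarith [pow_nonneg (abs_nonneg x) (2 * k)]
  · have := pow_le_pow_right₀ h (Nat.le_mul_of_pos_left k (by norm_num) : k ≤ 2 * k)
    linarith

lemma integrable_pow_exp (k : ℕ) :
    Integrable (fun x : ℝ => x ^ k * Real.exp (-(1/2) * x ^ 2)) volume := by
  have := integrable_rpow_mul_exp_neg_mul_sq (b := 1/2) (by norm_num) (s := (k : ℝ))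
    (lt_of_lt_of_le neg_one_lt_zero (Nat.cast_nonneg k))
  simpa [Real.rpow_natCast] using this

lemma gauss_integrable_abs_pow (k : ℕ) :
    Integrable (fun x => |x| ^ k) (gaussianReal 0 1) := by
  rw [gauss_integrable_iff]
  have hint : Integrable (fun x : ℝ =>
      (Real.sqrt (2 * π))⁻¹ * (Real.exp (-(1/2) * x ^ 2) + x ^ (2*k) * Real.exp (-(1/2) * x ^ 2)))
      volume := (((integrable_exp_neg_mul_sq (b := 1/2) (by norm_num)).add
        (integrable_pow_exp (2*k))).const_mul _)
  refine hint.mono' ?_ (Filter.Eventually.of_forall fun x => ?_)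
  · exact (gpdf_meas.mul ((measurable_id.abs).pow_const k)).aestronglyMeasurable
  · have h0 : 0 ≤ gpdf x * |x| ^ k := mul_nonneg (gpdf_nonneg x) (by positivity)
    rw [Real.norm_eq_abs, abs_of_nonneg h0, gpdf_eq]
    have hc : (0:ℝ) ≤ (Real.sqrt (2 * π))⁻¹ := by positivity
    have he : (0:ℝ) < Real.exp (-(1/2) * x ^ 2) := Real.exp_pos _
    have := abs_pow_le x k
    calc (Real.sqrt (2 * π))⁻¹ * Real.exp (-(1/2) * x ^ 2) * |x| ^ k
        ≤ (Real.sqrt (2 * π))⁻¹ * Real.exp (-(1/2) * x ^ 2) * (1 + x ^ (2*k)) := by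
          apply mul_le_mul_of_nonneg_left this (by positivity)
      _ = (Real.sqrt (2 * π))⁻¹ * (Real.exp (-(1/2) * x ^ 2) + x ^ (2*k) * Real.exp (-(1/2) * x ^ 2)) := by ring

lemma gauss_map_neg : (gaussianReal 0 1).map (fun x => (-1 : ℝ) * x) = gaussianReal 0 1 := by
  have := gaussianReal_map_const_mul (μ := 0) (v := 1) (-1 : ℝ)
  have h1 : (⟨(-1:ℝ)^2, sq_nonneg _⟩ : ℝ≥0) = 1 := by ext; norm_num
  simp only [mul_zero, h1, one_mul] at this
  simpa using this

lemma gauss_first_moment : ∫ x, x ∂(gaussianReal 0 1) = 0 := by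
  have h := gauss_map_neg
  have : ∫ x, x ∂(gaussianReal 0 1) = ∫ x, (-1 : ℝ) * x ∂(gaussianReal 0 1) := by
    conv_lhs => rw [← h]
    exact integral_map (by fun_prop) measurable_id'.aestronglyMeasurable
  simp only [neg_one_mul] at this
  rw [integral_neg] at this
  linarith

lemma even_integral_double {f : ℝ → ℝ} (hf : Integrable f volume) (he : ∀ x, f (-x) = f x) :
    ∫ x, f x = 2 * ∫ x in Set.Ioi (0:ℝ), f x := by
  have h1 : (∫ x in Set.Iic (0:ℝ), f x) + ∫ x in Set.Ioi (0:ℝ), f x = ∫ x, f x := by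
    have := integral_add_compl (measurableSet_Iic (a := (0:ℝ))) hf
    rwa [Set.compl_Iic] at this
  have h2 : (∫ x in Set.Ioi (0:ℝ), f x) = ∫ x in Set.Iic (0:ℝ), f x := by
    have := integral_comp_neg_Ioi (c := (0:ℝ)) f
    rw [neg_zero] at this
    rw [← this]
    exact setIntegral_congr_fun measurableSet_Ioi fun x _ => (he x).symm
  linarith

lemma rpow_half_eq_sqrt (x : ℝ) : x ^ ((1:ℝ)/2) = Real.sqrt x := by
  rw [Real.sqrt_eq_rpow]

lemma integral_sq_exp : ∫ x : ℝ, x ^ 2 * Real.exp (-(1/2) * x ^ 2)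
    = Real.sqrt 2 * Real.sqrt π := by
  have hev : ∀ x : ℝ, (-x) ^ 2 * Real.exp (-(1/2) * (-x) ^ 2)
      = x ^ 2 * Real.exp (-(1/2) * x ^ 2) := by intro x; rw [neg_sq]
  rw [even_integral_double (integrable_pow_exp 2) hev]
  have h1 : ∫ x in Set.Ioi (0:ℝ), x ^ (2:ℕ) * Real.exp (-(1/2) * x ^ (2:ℕ))
      = ((1:ℝ)/2) ^ (-(3:ℝ)/2) * (1/2) * Real.Gamma (3/2) := by
    have h := integral_rpow_mul_exp_neg_mul_rpow (p := 2) (q := 2) (b := 1/2)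
      two_pos (by norm_num) (by norm_num)
    rw [show -((2:ℝ)+1)/2 = -(3:ℝ)/2 by norm_num, show ((2:ℝ)+1)/2 = (3:ℝ)/2 by norm_num] at h
    rw [← h]
    refine setIntegral_congr_fun measurableSet_Ioi fun x _ => ?_
    rw [show ((2:ℝ)) = ((2:ℕ):ℝ) by norm_num, Real.rpow_natCast]
  have hG : Real.Gamma (3/2) = Real.sqrt π / 2 := by
    rw [show (3:ℝ)/2 = 1/2 + 1 by norm_num, Real.Gamma_add_one (by norm_num),
      Real.Gamma_one_half_eq]
    ring
  have hb : ((1:ℝ)/2) ^ (-(3:ℝ)/2) = 2 * Real.sqrt 2 := by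
    rw [show ((1:ℝ)/2) = (2:ℝ)⁻¹ by norm_num, show (-(3:ℝ)/2) = -((3:ℝ)/2) by norm_num,
      Real.inv_rpow (by norm_num : (0:ℝ) ≤ 2), Real.rpow_neg (by norm_num : (0:ℝ) ≤ 2), inv_inv,
      show ((3:ℝ)/2) = 1 + 1/2 by norm_num, Real.rpow_add (by norm_num : (0:ℝ) < 2),
      Real.rpow_one, rpow_half_eq_sqrt 2]
  rw [h1, hG, hb]
  ring

lemma gauss_second_moment : ∫ x, x ^ 2 ∂(gaussianReal 0 1) = 1 := by
  rw [gauss_integral]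
  have : ∀ x : ℝ, gpdf x * x ^ 2
      = (Real.sqrt (2*π))⁻¹ * (x ^ 2 * Real.exp (-(1/2) * x ^ 2)) := by
    intro x; rw [gpdf_eq]; ring
  simp_rw [this]
  rw [integral_const_mul, integral_sq_exp]
  have h2π : Real.sqrt (2*π) = Real.sqrt 2 * Real.sqrt π := Real.sqrt_mul (by norm_num) π
  rw [h2π]
  have : Real.sqrt 2 * Real.sqrt π ≠ 0 := by positivity
  field_simp

/-! ### Moments of products of independent random variables -/

lemma indep_pow_prod {Ω : Type} [MeasurableSpace Ω] {P : Measure Ω} [IsProbabilityMeasure P]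
    {m : ℕ} {ξ : Fin m → Ω → ℝ} (hmeas : ∀ j, Measurable (ξ j))
    (hind : iIndepFun ξ P)
    (k : Fin m → ℕ) {a : Fin m} {s : Finset (Fin m)} (ha : a ∉ s) :
    IndepFun (fun ω => ξ a ω ^ k a) (fun ω => ∏ j ∈ s, ξ j ω ^ k j) P := by
  have h := hind.indepFun_finset {a} s (by simpa using ha) hmeas
  have hφ : Measurable (fun v : ({a} : Finset (Fin m)) → ℝ =>
      v ⟨a, Finset.mem_singleton_self a⟩ ^ k a) := (measurable_pi_apply _).pow_const _
  have hψ : Measurable (fun v : {x // x ∈ s} → ℝ => ∏ j, v j ^ k j.1) :=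
    Finset.measurable_prod _ (fun j _ => (measurable_pi_apply _).pow_const _)
  have h2 := h.comp hφ hψ
  convert h2 using 1
  · funext ω; rfl
  funext ω
  exact (Finset.prod_coe_sort s (fun j => ξ j ω ^ k j)).symm

lemma moment_prod {Ω : Type} [MeasurableSpace Ω] {P : Measure Ω} [IsProbabilityMeasure P]
    {m : ℕ} {ξ : Fin m → Ω → ℝ} (hmeas : ∀ j, Measurable (ξ j))
    (hind : iIndepFun ξ P)
    {ν : Measure ℝ} (hmap : ∀ j, P.map (ξ j) = ν)
    (hint : ∀ p : ℕ, Integrable (fun x => |x| ^ p) ν)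
    (k : Fin m → ℕ) (s : Finset (Fin m)) :
    Integrable (fun ω => ∏ j ∈ s, ξ j ω ^ k j) P ∧
      ∫ ω, ∏ j ∈ s, ξ j ω ^ k j ∂P = ∏ j ∈ s, ∫ x, x ^ k j ∂ν := by
  classical
  induction s using Finset.induction_on with
  | empty => simp
  | @insert a s ha ih =>
    have hIν : Integrable (fun x : ℝ => x ^ k a) ν := by
      refine (hint (k a)).mono' (measurable_id'.pow_const _).aestronglyMeasurable
        (Filter.Eventually.of_forall fun x => ?_)
      rw [Real.norm_eq_abs, abs_pow]
    have hIa : Integrable (fun ω => ξ a ω ^ k a) P := by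
      have h := integrable_map_measure (μ := P) (f := ξ a) (g := fun x : ℝ => x ^ k a)
        (measurable_id'.pow_const (k a)).aestronglyMeasurable (hmeas a).aemeasurable
      rw [hmap a] at h
      exact h.mp hIν
    have hEa : ∫ ω, ξ a ω ^ k a ∂P = ∫ x, x ^ k a ∂ν := by
      rw [← hmap a,
        integral_map (hmeas a).aemeasurable (measurable_id'.pow_const (k a)).aestronglyMeasurable]
    have hi := indep_pow_prod hmeas hind k ha
    have hInt := hi.integrable_mul hIa ih.1
    have hIprod : Integrable (fun ω => ∏ j ∈ insert a s, ξ j ω ^ k j) P := by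
      simp_rw [Finset.prod_insert ha]
      exact hInt
    refine ⟨hIprod, ?_⟩
    have h2 := hi.integral_fun_mul_eq_mul_integral hIa.aestronglyMeasurable ih.1.aestronglyMeasurable
    simp_rw [Finset.prod_insert ha]
    calc ∫ ω, ξ a ω ^ k a * ∏ j ∈ s, ξ j ω ^ k j ∂P
        = (∫ ω, ξ a ω ^ k a ∂P) * ∫ ω, ∏ j ∈ s, ξ j ω ^ k j ∂P := h2
      _ = (∫ x, x ^ k a ∂ν) * ∏ j ∈ s, ∫ x, x ^ k j ∂ν := by rw [hEa, ih.2]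

/-! ### Combinatorics of multiplicities -/

def multc {r m : ℕ} (p : Fin r → Fin m) (j : Fin m) : ℕ :=
  (univ.filter fun i => p i = j).card

lemma prod_eq_prod_pow {r m : ℕ} (p : Fin r → Fin m) (f : Fin m → ℝ) :
    ∏ i, f (p i) = ∏ j, f j ^ multc p j := by
  rw [← Finset.prod_fiberwise_of_maps_to (fun i _ => mem_univ (p i)) (fun i => f (p i))]
  refine Finset.prod_congr rfl fun j _ => ?_
  rw [show ∏ i ∈ univ.filter fun i => p i = j, f (p i) = ∏ i ∈ univ.filter fun i => p i = j, f j
    from Finset.prod_congr rfl fun i hi => by rw [(mem_filter.mp hi).2], Finset.prod_const, multc]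

lemma sum_multc {r m : ℕ} (p : Fin r → Fin m) : ∑ j, multc p j = r := by
  have := Finset.card_eq_sum_card_fiberwise (fun i (_ : i ∈ (univ : Finset (Fin r))) =>
    mem_univ (p i))
  simp only [card_univ, Fintype.card_fin] at this
  exact this.symm

lemma filter_ne_zero_eq {r m : ℕ} (p q : Fin r → Fin m) :
    (univ.filter fun j => multc p j + multc q j ≠ 0) = (univ.image p) ∪ (univ.image q) := by
  ext j
  have h1 : ∀ p' : Fin r → Fin m, (multc p' j ≠ 0 ↔ ∃ i, p' i = j) := by
    intro p'
    rw [multc, Ne, Finset.card_eq_zero, ← ne_eq, ← Finset.nonempty_iff_ne_empty]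
    simp [Finset.filter_nonempty_iff]
  simp only [mem_filter, mem_univ, true_and, mem_union, mem_image, exists_prop]
  rw [Ne, Nat.add_eq_zero, not_and_or, ← ne_eq, ← ne_eq, h1 p, h1 q]

lemma card_support_le {r m : ℕ} {k : Fin m → ℕ} (hsum : ∑ j, k j = 2 * r)
    (h1 : ∀ j, k j ≠ 1) (h3 : ∃ j, 3 ≤ k j) :
    (univ.filter fun j => k j ≠ 0).card ≤ r - 1 := by
  obtain ⟨j0, hj0⟩ := h3
  set t := univ.filter fun j => k j ≠ 0 with ht
  have hj0t : j0 ∈ t := by simp only [ht, mem_filter, mem_univ, true_and]; omega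
  have hsum' : ∑ j ∈ t, k j = 2 * r := by
    rw [ht, Finset.sum_filter_ne_zero univ]
    exact hsum
  have hers : ∑ j ∈ t.erase j0, k j + k j0 = 2 * r := by
    rw [Finset.sum_erase_add t _ hj0t]; exact hsum'
  have hge : (t.erase j0).card • 2 ≤ ∑ j ∈ t.erase j0, (fun j => k j) j :=
    Finset.card_nsmul_le_sum (t.erase j0) (fun j => k j) 2 (fun j hj => by
      show 2 ≤ k j
      have h2 := Finset.mem_of_mem_erase hj
      rw [ht, mem_filter] at h2
      have := h1 j
      omega)
  rw [smul_eq_mul] at hge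
  simp only at hge
  have hcard : (t.erase j0).card = t.card - 1 := Finset.card_erase_of_mem hj0t
  have hpos : 1 ≤ t.card := Finset.card_pos.mpr ⟨j0, hj0t⟩
  omega

lemma card_small (r m : ℕ) (hr : 1 ≤ r) :
    ((univ : Finset ((Fin r → Fin m) × (Fin r → Fin m))).filter
      (fun u => ((univ.image u.1) ∪ (univ.image u.2)).card ≤ r - 1)).card
    ≤ (r-1)^(2*r) * m^(r-1) := by
  classical
  set T := ((univ : Finset ((Fin r → Fin m) × (Fin r → Fin m))).filter
      (fun u => ((univ.image u.1) ∪ (univ.image u.2)).card ≤ r - 1))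
  have hsurj : Set.SurjOn
      (fun w : (Fin (r-1) → Fin m) × ((Fin r → Fin (r-1)) × (Fin r → Fin (r-1))) =>
        (w.1 ∘ w.2.1, w.1 ∘ w.2.2))
      ↑(univ : Finset ((Fin (r-1) → Fin m) × ((Fin r → Fin (r-1)) × (Fin r → Fin (r-1))))) ↑T := by
    intro u hu
    simp only [Finset.coe_filter, Set.mem_setOf_eq, T, mem_univ, true_and] at hu
    set I := (univ.image u.1) ∪ (univ.image u.2) with hI
    have hcard : Fintype.card I ≤ Fintype.card (Fin (r-1)) := by
      rw [Fintype.card_coe, Fintype.card_fin]; exact hu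
    obtain ⟨e⟩ := Function.Embedding.nonempty_of_card_le hcard
    have hmem1 : ∀ i, u.1 i ∈ I := fun i =>
      Finset.mem_union_left _ (Finset.mem_image_of_mem u.1 (mem_univ i))
    have hmem2 : ∀ i, u.2 i ∈ I := fun i =>
      Finset.mem_union_right _ (Finset.mem_image_of_mem u.2 (mem_univ i))
    refine ⟨⟨fun x => if h : ∃ y : I, e y = x then (h.choose : I).1 else u.1 ⟨0, hr⟩,
      (fun i => e ⟨u.1 i, hmem1 i⟩, fun i => e ⟨u.2 i, hmem2 i⟩)⟩,
      Finset.mem_coe.mpr (mem_univ _), ?_⟩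
    have key : ∀ (z : I), (fun x => if h : ∃ y : I, e y = x then (h.choose : I).1
        else u.1 ⟨0, hr⟩) (e z) = z.1 := by
      intro z
      have h : ∃ y : I, e y = e z := ⟨z, rfl⟩
      simp only [dif_pos h]
      have := h.choose_spec
      have hz : h.choose = z := e.injective this
      rw [hz]
    ext i
    · exact congrArg Fin.val (key ⟨u.1 i, hmem1 i⟩)
    · exact congrArg Fin.val (key ⟨u.2 i, hmem2 i⟩)
  have := Finset.card_le_card_of_surjOn _ hsurj
  calc T.card ≤ _ := this
    _ = (r-1)^(2*r) * m^(r-1) := by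
      simp [Fintype.card_fun, two_mul, pow_add]
      ring

lemma prod_bound {m N : ℕ} (B : ℝ) (hB : 1 ≤ B) (f : Fin m → ℝ) (k : Fin m → ℕ)
    (hf0 : ∀ j, k j = 0 → f j = 1) (hfB : ∀ j, |f j| ≤ B) (hsum : ∑ j, k j = N) :
    |∏ j, f j| ≤ B ^ N := by
  classical
  set t := univ.filter (fun j : Fin m => k j ≠ 0) with htdef
  have h0 : ∏ j, f j = ∏ j ∈ t, f j := by
    refine (Finset.prod_subset (Finset.filter_subset _ _) ?_).symm
    intro j _ hj
    rw [mem_filter] at hj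
    exact hf0 j (by by_contra hk; exact hj ⟨Finset.mem_univ j, hk⟩)
  have hcard : t.card ≤ N := by
    calc t.card = ∑ _j ∈ t, 1 := (Finset.card_eq_sum_ones t)
      _ ≤ ∑ j ∈ t, k j := Finset.sum_le_sum (fun j hj => by
          rw [htdef, mem_filter] at hj; omega)
      _ = ∑ j, k j := Finset.sum_filter_ne_zero univ
      _ = N := hsum
  rw [h0]
  calc |∏ j ∈ t, f j| ≤ ∏ j ∈ t, |f j| := (Finset.abs_prod t f).le
    _ ≤ ∏ _j ∈ t, B := Finset.prod_le_prod (fun j _ => abs_nonneg _) (fun j _ => hfB j)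
    _ = B ^ t.card := Finset.prod_const B
    _ ≤ B ^ N := pow_le_pow_right₀ hB hcard

/-! ### Expansion of the second moment of the chaos -/

lemma chaos_sq_integral {Ω : Type} [MeasurableSpace Ω] {P : Measure Ω} [IsProbabilityMeasure P]
    {m r : ℕ} {ξ : Fin m → Ω → ℝ} (hmeas : ∀ j, Measurable (ξ j))
    (hind : iIndepFun ξ P)
    {ν : Measure ℝ} (hmap : ∀ j, P.map (ξ j) = ν)
    (hint : ∀ p : ℕ, Integrable (fun x => |x| ^ p) ν) :
    ∫ ω, (chaos r ξ ω) ^ 2 ∂P = ((m:ℝ) ^ (-(r:ℝ)/2))^2 *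
      ∑ u ∈ (chainSet m r) ×ˢ (chainSet m r),
        ∏ j, ∫ x, x ^ (multc u.1 j + multc u.2 j) ∂ν := by
  have hch : ∀ ω, (chaos r ξ ω) ^ 2 = ((m:ℝ) ^ (-(r:ℝ)/2))^2 *
      ∑ u ∈ (chainSet m r) ×ˢ (chainSet m r),
        ∏ j, ξ j ω ^ (multc u.1 j + multc u.2 j) := by
    intro ω
    calc (chaos r ξ ω) ^ 2
        = ((m:ℝ) ^ (-(r:ℝ)/2))^2 * ((∑ p ∈ chainSet m r, ∏ i, ξ (p i) ω) *
            ∑ q ∈ chainSet m r, ∏ i, ξ (q i) ω) := by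
          rw [chaos, mul_pow, sq (∑ n ∈ chainSet m r, ∏ i, ξ (n i) ω)]
      _ = ((m:ℝ) ^ (-(r:ℝ)/2))^2 * ∑ u ∈ (chainSet m r) ×ˢ (chainSet m r),
            (∏ i, ξ (u.1 i) ω) * ∏ i, ξ (u.2 i) ω := by
          rw [Finset.sum_mul_sum, ← Finset.sum_product']
      _ = _ := by
          congr 1
          refine Finset.sum_congr rfl fun u _ => ?_
          rw [prod_eq_prod_pow u.1 (fun j => ξ j ω), prod_eq_prod_pow u.2 (fun j => ξ j ω),
            ← Finset.prod_mul_distrib]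
          exact Finset.prod_congr rfl fun j _ => (pow_add _ _ _).symm
  simp_rw [hch]
  rw [integral_const_mul, integral_finset_sum _
    (fun u _ => (moment_prod hmeas hind hmap hint (fun j => multc u.1 j + multc u.2 j) univ).1)]
  congr 1
  exact Finset.sum_congr rfl fun u _ => by
    simpa using (moment_prod hmeas hind hmap hint (fun j => multc u.1 j + multc u.2 j) univ).2

end Aux

/-- comparison of the second moment of the chain chaos `χ_r` under
general i.i.d. centred unit-variance entries (with all moments finite) with the
one under standard Gaussian entries, up to an error `C/m`. -/
theorem stmt19 (r : ℕ) (hr : 1 ≤ r)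
    (ν : Measure ℝ) [IsProbabilityMeasure ν]
    (hcent : ∫ x, x ∂ν = 0) (hvar : ∫ x, x ^ 2 ∂ν = 1)
    (hmom : ∀ p : ℕ, Integrable (fun x => |x| ^ p) ν) :
    ∃ C : ℝ, 0 < C ∧
      ∀ (m : ℕ), 1 ≤ m →
        ∀ (Ω : Type) (_ : MeasurableSpace Ω) (P : Measure Ω) (_ : IsProbabilityMeasure P)
          (ξ g : Fin m → Ω → ℝ),
          (∀ j, Measurable (ξ j)) → (∀ j, Measurable (g j)) →
          iIndepFun ξ P →
          (∀ j, P.map (ξ j) = ν) →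
          iIndepFun g P →
          (∀ j, P.map (g j) = gaussianReal 0 1) →
          ∫ ω, (chaos r ξ ω) ^ 2 ∂P ≤ (∫ ω, (chaos r g ω) ^ 2 ∂P) + C / m := by
  classical
  set γ := gaussianReal 0 1 with hγdef
  have hν1 : ∫ x, x ^ 1 ∂ν = 0 := by simpa using hcent
  have hγ1 : ∫ x, x ^ 1 ∂γ = 0 := by simp only [pow_one]; exact gauss_first_moment
  have hγ2 : ∫ x, x ^ 2 ∂γ = 1 := gauss_second_moment
  set B : ℝ := 1 + ∑ n ∈ Finset.range (2*r+1), (|∫ x, x ^ n ∂ν| + |∫ x, x ^ n ∂γ|) with hBdef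
  have hsumnn : 0 ≤ ∑ n ∈ Finset.range (2*r+1), (|∫ x, x ^ n ∂ν| + |∫ x, x ^ n ∂γ|) :=
    Finset.sum_nonneg fun n _ => by positivity
  have hB1 : 1 ≤ B := by rw [hBdef]; linarith
  have hB0 : 0 ≤ B := by linarith
  have hBbound : ∀ n : ℕ, n ≤ 2*r → |∫ x, x ^ n ∂ν| ≤ B ∧ |∫ x, x ^ n ∂γ| ≤ B := by
    intro n hn
    have hmem : n ∈ Finset.range (2*r+1) := Finset.mem_range.mpr (by omega)
    have hle := Finset.single_le_sum
      (f := fun n => |∫ x, x ^ n ∂ν| + |∫ x, x ^ n ∂γ|) (fun i _ => by positivity) hmem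
    constructor
    · have := abs_nonneg (∫ x, x ^ n ∂γ); rw [hBdef]; linarith
    · have := abs_nonneg (∫ x, x ^ n ∂ν); rw [hBdef]; linarith
  set a : ℕ := r - 1 with hadef
  refine ⟨2 * B^(2*r) * ((a^(2*r) : ℕ) : ℝ) + 1, ?_, ?_⟩
  · have h1 : (0:ℝ) ≤ 2 * B^(2*r) * ((a^(2*r) : ℕ) : ℝ) :=
      mul_nonneg (mul_nonneg (by norm_num) (pow_nonneg hB0 _)) (Nat.cast_nonneg _)
    linarith
  intro m hm Ω mΩ P hP ξ g hmξ hmg hiξ hdξ hig hdg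
  rw [chaos_sq_integral hmξ hiξ hdξ hmom,
    chaos_sq_integral hmg hig hdg gauss_integrable_abs_pow]
  set c2 : ℝ := ((m:ℝ) ^ (-(r:ℝ)/2))^2 with hc2def
  have hm0 : (0:ℝ) < m := by exact_mod_cast hm
  have hc2 : c2 = ((m:ℝ)^r)⁻¹ := by
    rw [hc2def, ← Real.rpow_natCast ((m:ℝ) ^ (-(r:ℝ)/2)) 2,
      ← Real.rpow_mul (Nat.cast_nonneg m),
      show (-(r:ℝ)/2 * ((2:ℕ):ℝ)) = -(r:ℝ) by push_cast; ring,
      Real.rpow_neg (Nat.cast_nonneg m), Real.rpow_natCast]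
  have hc2nn : 0 ≤ c2 := by rw [hc2]; positivity
  -- notation
  set cs := chainSet m r with hcs
  set k : ((Fin r → Fin m) × (Fin r → Fin m)) → Fin m → ℕ :=
    fun u j => multc u.1 j + multc u.2 j with hkdef
  have hksum : ∀ u, ∑ j, k u j = 2*r := by
    intro u
    rw [hkdef]
    simp only
    rw [Finset.sum_add_distrib, sum_multc, sum_multc, two_mul]
  set d : ((Fin r → Fin m) × (Fin r → Fin m)) → ℝ :=
    fun u => (∏ j, ∫ x, x ^ (k u j) ∂ν) - ∏ j, ∫ x, x ^ (k u j) ∂γ with hddef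
  set Bad : ((Fin r → Fin m) × (Fin r → Fin m)) → Prop :=
    fun u => ((Finset.univ.image u.1) ∪ (Finset.univ.image u.2)).card ≤ r - 1 with hBad
  have hvanish : ∀ u ∈ cs ×ˢ cs, d u ≠ 0 → Bad u := by
    intro u _ hd
    have h1 : ∀ j, k u j ≠ 1 := by
      intro j hj
      apply hd
      rw [hddef]
      simp only
      rw [Finset.prod_eq_zero (Finset.mem_univ j) (by rw [hj]; exact hν1),
        Finset.prod_eq_zero (Finset.mem_univ j) (by rw [hj]; exact hγ1), sub_zero]
    have h3 : ∃ j, 3 ≤ k u j := by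
      by_contra hno
      push_neg at hno
      apply hd
      rw [hddef]
      simp only
      rw [sub_eq_zero]
      refine Finset.prod_congr rfl fun j _ => ?_
      have := h1 j
      have := hno j
      interval_cases h : (k u j)
      · simp
      · exact absurd rfl (h ▸ h1 j)
      · rw [hvar, hγ2]
    rw [hBad]
    have := card_support_le (hksum u) h1 h3
    rwa [hkdef, filter_ne_zero_eq u.1 u.2] at this
  have hdbound : ∀ u ∈ (cs ×ˢ cs).filter Bad, d u ≤ 2 * B^(2*r) := by
    intro u _
    have hkle : ∀ j, k u j ≤ 2*r := by
      intro j
      have h := Finset.single_le_sum (f := fun j => k u j) (fun i _ => Nat.zero_le _)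
        (Finset.mem_univ j)
      rw [hksum u] at h
      exact h
    have hbν : |∏ j, ∫ x, x ^ (k u j) ∂ν| ≤ B^(2*r) :=
      prod_bound B hB1 _ (k u) (fun j hj => by rw [hj]; simp)
        (fun j => (hBbound (k u j) (hkle j)).1) (hksum u)
    have hbγ : |∏ j, ∫ x, x ^ (k u j) ∂γ| ≤ B^(2*r) :=
      prod_bound B hB1 _ (k u) (fun j hj => by rw [hj]; simp)
        (fun j => (hBbound (k u j) (hkle j)).2) (hksum u)
    rw [hddef]
    simp only
    have := abs_sub_abs_le_abs_sub (∏ j, ∫ x, x ^ (k u j) ∂ν) (∏ j, ∫ x, x ^ (k u j) ∂γ)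
    have h := le_abs_self ((∏ j, ∫ x, x ^ (k u j) ∂ν) - ∏ j, ∫ x, x ^ (k u j) ∂γ)
    have habs := abs_sub (∏ j, ∫ x, x ^ (k u j) ∂ν) (∏ j, ∫ x, x ^ (k u j) ∂γ)
    calc (∏ j, ∫ x, x ^ (k u j) ∂ν) - ∏ j, ∫ x, x ^ (k u j) ∂γ
        ≤ |∏ j, ∫ x, x ^ (k u j) ∂ν| + |∏ j, ∫ x, x ^ (k u j) ∂γ| := by
          have := neg_abs_le (∏ j, ∫ x, x ^ (k u j) ∂γ)
          have := le_abs_self (∏ j, ∫ x, x ^ (k u j) ∂ν)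
          linarith
      _ ≤ 2 * B^(2*r) := by linarith
  have hcardBad : ((cs ×ˢ cs).filter Bad).card ≤ a^(2*r) * m^a := by
    calc ((cs ×ˢ cs).filter Bad).card
        ≤ ((Finset.univ : Finset ((Fin r → Fin m) × (Fin r → Fin m))).filter Bad).card :=
          Finset.card_le_card (Finset.filter_subset_filter _ (Finset.subset_univ _))
      _ ≤ a^(2*r) * m^a := by rw [hadef]; exact card_small r m hr
  -- main estimate
  have hsumle : ∑ u ∈ cs ×ˢ cs, d u ≤ ((a^(2*r) * m^a : ℕ) : ℝ) * (2 * B^(2*r)) := by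
    rw [← Finset.sum_filter_of_ne hvanish]
    calc ∑ u ∈ (cs ×ˢ cs).filter Bad, d u
        ≤ ((cs ×ˢ cs).filter Bad).card • (2 * B^(2*r)) :=
          Finset.sum_le_card_nsmul _ _ _ hdbound
      _ = (((cs ×ˢ cs).filter Bad).card : ℝ) * (2 * B^(2*r)) := by
          rw [nsmul_eq_mul]
      _ ≤ ((a^(2*r) * m^a : ℕ) : ℝ) * (2 * B^(2*r)) := by
          have h2 : (0:ℝ) ≤ 2 * B^(2*r) := by positivity
          exact mul_le_mul_of_nonneg_right (by exact_mod_cast hcardBad) h2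
  have hfinal : c2 * ∑ u ∈ cs ×ˢ cs, d u ≤ (2 * B^(2*r) * ((a^(2*r) : ℕ) : ℝ) + 1) / m := by
    calc c2 * ∑ u ∈ cs ×ˢ cs, d u
        ≤ c2 * (((a^(2*r) * m^a : ℕ) : ℝ) * (2 * B^(2*r))) := by
          apply mul_le_mul_of_nonneg_left hsumle hc2nn
      _ = (2 * B^(2*r) * ((a^(2*r) : ℕ) : ℝ)) / m := by
          rw [hc2]
          have hmr : (m:ℝ)^r = (m:ℝ)^a * m := by
            rw [← pow_succ]
            congr 1
            omega
          push_cast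
          rw [hmr]
          have h1 : ((m:ℝ)^a) ≠ 0 := by positivity
          field_simp
      _ ≤ (2 * B^(2*r) * ((a^(2*r) : ℕ) : ℝ) + 1) / m := by
          gcongr
          linarith
  have hexpand : c2 * ∑ u ∈ cs ×ˢ cs, d u
      = c2 * (∑ u ∈ cs ×ˢ cs, ∏ j, ∫ x, x ^ (k u j) ∂ν)
        - c2 * (∑ u ∈ cs ×ˢ cs, ∏ j, ∫ x, x ^ (k u j) ∂γ) := by
    rw [hddef, Finset.sum_sub_distrib, mul_sub]
  linarith [hfinal, hexpand.symm.le]
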